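/- Let S be a numerical semigroup with Frobenius number f and genus g, and let F > 2f be a positive integer. Then the numerical semigroup S' = ℕ \ ({1,...,F} \ {F − a : a ∈ ℕ \ S}) is almost symmetric with Frobenius number F and type F − 2g. -/

import Mathlib

/-- A numerical semigroup, viewed as a set of integers: it consists of
nonnegative integers, contains 0, is closed under addition, and is cofinite
in the nonnegative integers. -/
def IsNumericalSemigroup (S : Set ℤ) : Prop :=
  (∀ z ∈ S, 0 ≤ z) ∧ 0 ∈ S ∧ (∀ a b, a ∈ S → b ∈ S → a + b ∈ S) ∧
    {z : ℤ | 0 ≤ z ∧ z ∉ S}.Finite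

/-- The set of gaps of `S`: nonnegative integers not in `S`. -/
def Gaps (S : Set ℤ) : Set ℤ := {z : ℤ | 0 ≤ z ∧ z ∉ S}

/-- `f` is the Frobenius number of `S`: the largest integer not in `S`. -/
def IsFrobenius (S : Set ℤ) (f : ℤ) : Prop := f ∉ S ∧ ∀ z : ℤ, z ∉ S → z ≤ f

/-- The set of pseudo-Frobenius numbers of `S`. -/
def PF (S : Set ℤ) : Set ℤ := {x : ℤ | x ∉ S ∧ ∀ s ∈ S, s ≠ 0 → x + s ∈ S}

/-- `m` is the multiplicity of `S`: its smallest nonzero element. -/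
def IsMultiplicity (S : Set ℤ) (m : ℤ) : Prop :=
  m ∈ S ∧ m ≠ 0 ∧ ∀ s ∈ S, s ≠ 0 → m ≤ s

/-- `S` is almost symmetric: `2 g(S) = F(S) + t(S)`. -/
def AlmostSymmetric (S : Set ℤ) : Prop :=
  ∃ f, IsFrobenius S f ∧ (2 * (Gaps S).ncard : ℤ) = f + ((PF S).ncard : ℤ)

/-- A gapset: a finite set of positive integers such that whenever a sum of
two positive integers lies in it, one of the summands does. -/
def IsGapset (G : Set ℤ) : Prop :=
  G.Finite ∧ (∀ x ∈ G, 0 < x) ∧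
    ∀ a b : ℤ, 0 < a → 0 < b → a + b ∈ G → a ∈ G ∨ b ∈ G

/-- The set `{1, …, F} \ {F - a : a ∈ ℕ \ S}`. -/
def GapsetOf (S : Set ℤ) (F : ℤ) : Set ℤ :=
  {z : ℤ | 1 ≤ z ∧ z ≤ F ∧ ¬ ∃ a : ℤ, 0 ≤ a ∧ a ∉ S ∧ z = F - a}

/-- The `s`-shifted canonical ideal `K_S(s) = {f + s - w : w ∈ ℤ \ S}`,
where `f` is the Frobenius number of `S`. -/
def KIdeal (S : Set ℤ) (f s : ℤ) : Set ℤ :=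
  {z : ℤ | ∃ w : ℤ, w ∉ S ∧ z = f + s - w}

namespace Stmt3Aux

variable {S : Set ℤ} {f F : ℤ}

lemma gap_mem (hS : IsNumericalSemigroup S) (hf : IsFrobenius S f)
    {a : ℤ} (ha : a ∈ Gaps S) : 1 ≤ a ∧ a ≤ f := by
  obtain ⟨ha0, haS⟩ := ha
  refine ⟨?_, hf.2 a haS⟩
  rcases ha0.lt_or_eq with h | h
  · linarith
  · exact absurd (h ▸ hS.2.1) haS

lemma mem_iff (hS : IsNumericalSemigroup S) (hf : IsFrobenius S f)
    (hFpos : 0 < F) (hF : 2 * f < F) (z : ℤ) :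
    z ∈ {z : ℤ | 0 ≤ z ∧ z ∉ GapsetOf S F} ↔
      z = 0 ∨ F < z ∨ ∃ a ∈ Gaps S, z = F - a := by
  constructor
  · rintro ⟨hz0, hz⟩
    rcases hz0.lt_or_eq with h1 | h1
    · rcases lt_or_ge F z with h2 | h2
      · exact Or.inr (Or.inl h2)
      · refine Or.inr (Or.inr ?_)
        by_contra hc
        exact hz ⟨h1, h2, fun ⟨a, ha0, haS, hza⟩ => hc ⟨a, ⟨ha0, haS⟩, hza⟩⟩
    · exact Or.inl h1.symm
  · rintro (rfl | hFz | ⟨a, haG, rfl⟩)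
    · exact ⟨le_refl 0, fun h => by linarith [h.1]⟩
    · exact ⟨by linarith, fun h => by linarith [h.2.1]⟩
    · obtain ⟨ha1, haf⟩ := gap_mem hS hf haG
      exact ⟨by linarith, fun h => h.2.2 ⟨a, by linarith, haG.2, rfl⟩⟩

lemma F_not_mem (hS : IsNumericalSemigroup S) (hf : IsFrobenius S f)
    (hFpos : 0 < F) (hF : 2 * f < F) :
    F ∉ {z : ℤ | 0 ≤ z ∧ z ∉ GapsetOf S F} := by
  rw [mem_iff hS hf hFpos hF]
  rintro (h | h | ⟨a, haG, ha⟩)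
  · linarith
  · linarith
  · obtain ⟨ha1, haf⟩ := gap_mem hS hf haG
    linarith

lemma frob (hS : IsNumericalSemigroup S) (hf : IsFrobenius S f)
    (hFpos : 0 < F) (hF : 2 * f < F) :
    IsFrobenius {z : ℤ | 0 ≤ z ∧ z ∉ GapsetOf S F} F := by
  refine ⟨F_not_mem hS hf hFpos hF, fun z hz => ?_⟩
  by_contra h
  push_neg at h
  exact hz ((mem_iff hS hf hFpos hF z).2 (Or.inr (Or.inl h)))

lemma big (hS : IsNumericalSemigroup S) (hf : IsFrobenius S f)
    (hFpos : 0 < F) (hF : 2 * f < F) {z : ℤ}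
    (hz : z ∈ {z : ℤ | 0 ≤ z ∧ z ∉ GapsetOf S F}) (hz0 : z ≠ 0) : F < 2 * z := by
  rcases (mem_iff hS hf hFpos hF z).1 hz with h | h | ⟨a, haG, rfl⟩
  · exact absurd h hz0
  · linarith
  · obtain ⟨ha1, haf⟩ := gap_mem hS hf haG
    linarith

lemma nsg (hS : IsNumericalSemigroup S) (hf : IsFrobenius S f)
    (hFpos : 0 < F) (hF : 2 * f < F) :
    IsNumericalSemigroup {z : ℤ | 0 ≤ z ∧ z ∉ GapsetOf S F} := by
  refine ⟨fun z hz => hz.1, (mem_iff hS hf hFpos hF 0).2 (Or.inl rfl), ?_, ?_⟩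
  · intro a b ha hb
    rcases eq_or_ne a 0 with rfl | ha0
    · simpa using hb
    rcases eq_or_ne b 0 with rfl | hb0
    · simpa using ha
    have h1 := big hS hf hFpos hF ha ha0
    have h2 := big hS hf hFpos hF hb hb0
    exact (mem_iff hS hf hFpos hF _).2 (Or.inr (Or.inl (by linarith)))
  · apply Set.Finite.subset (Set.finite_Icc 0 F)
    rintro z ⟨hz0, hz⟩
    rw [mem_iff hS hf hFpos hF] at hz
    push_neg at hz
    exact ⟨hz0, hz.2.1⟩

lemma gaps_eq (hS : IsNumericalSemigroup S) (hf : IsFrobenius S f)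
    (hFpos : 0 < F) (hF : 2 * f < F) :
    Gaps {z : ℤ | 0 ≤ z ∧ z ∉ GapsetOf S F}
      = Set.Icc 1 F \ ((fun a => F - a) '' Gaps S) := by
  ext z
  simp only [Gaps, Set.mem_setOf_eq, Set.mem_diff, Set.mem_Icc, Set.mem_image,
    mem_iff hS hf hFpos hF]
  constructor
  · rintro ⟨hz0, hz⟩
    push_neg at hz
    obtain ⟨h1, h2, h3⟩ := hz
    refine ⟨⟨by omega, h2⟩, ?_⟩
    rintro ⟨a, haG, ha⟩
    exact h3 a haG ha.symm
  · rintro ⟨⟨h1, h2⟩, h3⟩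
    refine ⟨by linarith, ?_⟩
    push_neg
    exact ⟨by omega, h2, fun a haG ha => h3 ⟨a, haG, ha.symm⟩⟩

lemma gaps_sub (hS : IsNumericalSemigroup S) (hf : IsFrobenius S f)
    (hFpos : 0 < F) (hF : 2 * f < F) :
    Gaps S ⊆ Gaps {z : ℤ | 0 ≤ z ∧ z ∉ GapsetOf S F} := by
  intro x hx
  obtain ⟨h1, h2⟩ := gap_mem hS hf hx
  refine ⟨by linarith, ?_⟩
  rw [mem_iff hS hf hFpos hF]
  rintro (h | h | ⟨a, haG, ha⟩)
  · omega
  · linarith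
  · obtain ⟨ha1, haf⟩ := gap_mem hS hf haG
    omega

lemma pf_eq (hS : IsNumericalSemigroup S) (hf : IsFrobenius S f)
    (hFpos : 0 < F) (hF : 2 * f < F) :
    PF {z : ℤ | 0 ≤ z ∧ z ∉ GapsetOf S F}
      = Gaps {z : ℤ | 0 ≤ z ∧ z ∉ GapsetOf S F} \ Gaps S := by
  have hFn := F_not_mem hS hf hFpos hF
  ext x
  constructor
  · rintro ⟨hxS', hx⟩
    have hx0 : 0 ≤ x := by
      by_contra h
      push_neg at h
      have hs : F - x ∈ {z : ℤ | 0 ≤ z ∧ z ∉ GapsetOf S F} :=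
        (mem_iff hS hf hFpos hF _).2 (Or.inr (Or.inl (by linarith)))
      have := hx _ hs (by intro h'; omega)
      rw [show x + (F - x) = F by ring] at this
      exact hFn this
    refine ⟨⟨hx0, hxS'⟩, ?_⟩
    intro hxG
    obtain ⟨h1, h2⟩ := gap_mem hS hf hxG
    have hs : F - x ∈ {z : ℤ | 0 ≤ z ∧ z ∉ GapsetOf S F} :=
      (mem_iff hS hf hFpos hF _).2 (Or.inr (Or.inr ⟨x, hxG, rfl⟩))
    have := hx _ hs (by intro h'; omega)
    rw [show x + (F - x) = F by ring] at this
    exact hFn this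
  · rintro ⟨⟨hx0, hxS'⟩, hxG⟩
    have hxS : x ∈ S := by
      by_contra h
      exact hxG ⟨hx0, h⟩
    have hx1 : 1 ≤ x := by
      rcases hx0.lt_or_eq with h | h
      · linarith
      · rw [← h] at hxS'
        exact absurd ((mem_iff hS hf hFpos hF 0).2 (Or.inl rfl)) hxS'
    refine ⟨hxS', fun s hs hs0 => ?_⟩
    rcases (mem_iff hS hf hFpos hF s).1 hs with rfl | h | ⟨a, haG, rfl⟩
    · exact absurd rfl hs0
    · exact (mem_iff hS hf hFpos hF _).2 (Or.inr (Or.inl (by linarith)))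
    · obtain ⟨ha1, haf⟩ := gap_mem hS hf haG
      rcases lt_or_ge a x with h | h
      · exact (mem_iff hS hf hFpos hF _).2 (Or.inr (Or.inl (by linarith)))
      · have hax : x < a := by
          rcases h.lt_or_eq with h' | h'
          · exact h'
          · exact absurd (h' ▸ hxS) haG.2
        have haxS : a - x ∉ S := by
          intro hc
          exact haG.2 (by simpa using hS.2.2.1 x (a - x) hxS hc)
        refine (mem_iff hS hf hFpos hF _).2 (Or.inr (Or.inr ⟨a - x, ⟨by linarith, haxS⟩, by ring⟩))

end Stmt3Aux

namespace Stmt3Aux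

lemma img_sub (hS : IsNumericalSemigroup S) (hf : IsFrobenius S f)
    (hFpos : 0 < F) (hF : 2 * f < F) :
    (fun a => F - a) '' Gaps S ⊆ Set.Icc 1 F := by
  rintro z ⟨a, haG, rfl⟩
  obtain ⟨h1, h2⟩ := gap_mem hS hf haG
  exact ⟨by dsimp; linarith, by dsimp; linarith⟩

lemma card_gaps' (hS : IsNumericalSemigroup S) (hf : IsFrobenius S f)
    (hFpos : 0 < F) (hF : 2 * f < F) :
    ((Gaps {z : ℤ | 0 ≤ z ∧ z ∉ GapsetOf S F}).ncard : ℤ) = F - (Gaps S).ncard := by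
  have hinj : Function.Injective (fun a : ℤ => F - a) := fun a b h => by
    dsimp at h; omega
  have hsub := img_sub hS hf hFpos hF
  have hIfin : (Set.Icc (1:ℤ) F).Finite := Set.finite_Icc 1 F
  have hIcard : (Set.Icc (1:ℤ) F).ncard = F.toNat := by
    rw [← Finset.coe_Icc, Set.ncard_coe_finset, Int.card_Icc]
    simp
  have himg : ((fun a => F - a) '' Gaps S).ncard = (Gaps S).ncard :=
    Set.ncard_image_of_injective _ hinj
  have hle : ((fun a => F - a) '' Gaps S).ncard ≤ F.toNat := by
    rw [← hIcard]; exact Set.ncard_le_ncard hsub hIfin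
  rw [gaps_eq hS hf hFpos hF, Set.ncard_diff hsub (hS.2.2.2.image _), hIcard, himg]
  rw [himg] at hle
  omega

lemma card_pf (hS : IsNumericalSemigroup S) (hf : IsFrobenius S f)
    (hFpos : 0 < F) (hF : 2 * f < F) :
    ((PF {z : ℤ | 0 ≤ z ∧ z ∉ GapsetOf S F}).ncard : ℤ)
      = F - 2 * ((Gaps S).ncard : ℤ) := by
  have hfin : (Gaps {z : ℤ | 0 ≤ z ∧ z ∉ GapsetOf S F}).Finite := by
    rw [gaps_eq hS hf hFpos hF]
    exact (Set.finite_Icc 1 F).diff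
  have hsub := gaps_sub hS hf hFpos hF
  have hle : (Gaps S).ncard ≤ (Gaps {z : ℤ | 0 ≤ z ∧ z ∉ GapsetOf S F}).ncard :=
    Set.ncard_le_ncard hsub hfin
  have h1 := card_gaps' hS hf hFpos hF
  rw [pf_eq hS hf hFpos hF, Set.ncard_diff hsub hS.2.2.2]
  omega

end Stmt3Aux

theorem stmt3 (S : Set ℤ) (f F : ℤ)
    (hS : IsNumericalSemigroup S) (hf : IsFrobenius S f)
    (hFpos : 0 < F) (hF : 2 * f < F) :
    IsNumericalSemigroup {z : ℤ | 0 ≤ z ∧ z ∉ GapsetOf S F} ∧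
    AlmostSymmetric {z : ℤ | 0 ≤ z ∧ z ∉ GapsetOf S F} ∧
    IsFrobenius {z : ℤ | 0 ≤ z ∧ z ∉ GapsetOf S F} F ∧
    ((PF {z : ℤ | 0 ≤ z ∧ z ∉ GapsetOf S F}).ncard : ℤ)
      = F - 2 * ((Gaps S).ncard : ℤ) := by
  refine ⟨Stmt3Aux.nsg hS hf hFpos hF, ?_, Stmt3Aux.frob hS hf hFpos hF,
    Stmt3Aux.card_pf hS hf hFpos hF⟩
  refine ⟨F, Stmt3Aux.frob hS hf hFpos hF, ?_⟩
  have h1 := Stmt3Aux.card_gaps' hS hf hFpos hF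
  have h2 := Stmt3Aux.card_pf hS hf hFpos hF
  linarith
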